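/- For any finite posets P and Q on d elements, Ω(C_P, C_Q) is a normal polytope: every lattice point of N·Ω(C_P,C_Q) is a sum of N lattice points of Ω(C_P,C_Q). -/

import Mathlib

open scoped Pointwise

def chainPolytope {d : ℕ} (r : Fin d → Fin d → Prop) : Set (Fin d → ℝ) :=
  {x | (∀ i, 0 ≤ x i) ∧
    ∀ c : Finset (Fin d), IsMaxChain r (c : Set (Fin d)) → ∑ i ∈ c, x i ≤ 1}

def OmegaPoly {d : ℕ} (A B : Set (Fin d → ℝ)) : Set (Fin (d + 1) → ℝ) :=
  convexHull ℝ
    (((fun x => Fin.snoc x (1 : ℝ)) '' A) ∪ ((fun x => Fin.snoc (-x) (-1 : ℝ)) '' B))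

def IsLatticePoint {n : ℕ} (x : Fin n → ℝ) : Prop := ∀ i, ∃ z : ℤ, x i = z

lemma zero_mem_chainPolytope {d : ℕ} (r : Fin d → Fin d → Prop) :
    (0 : Fin d → ℝ) ∈ chainPolytope r :=
  ⟨fun _ => le_refl 0, fun c _ => by simp⟩

lemma snoc_add {d : ℕ} (x y : Fin d → ℝ) (a b : ℝ) :
    (Fin.snoc x a : Fin (d+1) → ℝ) + Fin.snoc y b = Fin.snoc (x + y) (a + b) := by
  funext i
  refine Fin.lastCases ?_ ?_ i <;> simp

lemma map_snoc_sum {d : ℕ} (L : List (Fin d → ℝ)) (c : ℝ) :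
    (L.map (fun u => (Fin.snoc u c : Fin (d+1) → ℝ))).sum
      = Fin.snoc L.sum (L.length * c) := by
  induction L with
  | nil => funext i; refine Fin.lastCases ?_ ?_ i <;> simp
  | cons h t iht =>
    simp only [List.map_cons, List.sum_cons, iht, snoc_add, List.length_cons]
    congr 1
    push_cast
    ring

lemma map_snoc_neg_sum {d : ℕ} (L : List (Fin d → ℝ)) (c : ℝ) :
    (L.map (fun u => (Fin.snoc (-u) c : Fin (d+1) → ℝ))).sum
      = Fin.snoc (-L.sum) (L.length * c) := by
  induction L with
  | nil => funext i; refine Fin.lastCases ?_ ?_ i <;> simp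
  | cons h t iht =>
    simp only [List.map_cons, List.sum_cons, iht, snoc_add, List.length_cons]
    rw [show -(h + t.sum) = -h + -t.sum by ring]
    congr 1
    push_cast
    ring

lemma chain_decomp {d : ℕ} (P : PartialOrder (Fin d)) :
    ∀ k : ℕ, ∀ x : Fin d → ℤ, (∀ i, 0 ≤ x i) →
      (∀ c : Finset (Fin d), IsMaxChain P.le (c : Set (Fin d)) → ∑ i ∈ c, x i ≤ (k : ℤ)) →
      ∃ L : List (Fin d → ℝ), L.length = k ∧
        (∀ u ∈ L, u ∈ chainPolytope P.le ∧ IsLatticePoint u) ∧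
        (fun i => (x i : ℝ)) = L.sum := by
  intro k
  classical
  induction k with
  | zero =>
    intro x hx hb
    refine ⟨[], rfl, by simp, ?_⟩
    have hx0 : ∀ i, x i = 0 := by
      intro i
      have hchain : IsChain P.le ({i} : Set (Fin d)) :=
        Set.Subsingleton.isChain Set.subsingleton_singleton
      obtain ⟨M, hM, hsub⟩ := hchain.exists_maxChain
      have hfin : M.Finite := Set.toFinite M
      have hbM := hb hfin.toFinset (by rwa [Set.Finite.coe_toFinset])
      have hiM : i ∈ hfin.toFinset := hfin.mem_toFinset.2 (hsub rfl)
      have h1 := Finset.single_le_sum (fun j _ => hx j) hiM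
      have h2 := hx i
      omega
    funext i
    simp [hx0 i, List.sum_nil]
  | succ k ih =>
    intro x hx hb
    set S : Finset (Fin d) := Finset.univ.filter (fun i => x i ≠ 0) with hS
    set A : Finset (Fin d) := S.filter (fun i => ∀ j ∈ S, P.le j i → j = i) with hA
    have hAS : ∀ i ∈ A, x i ≠ 0 := by
      intro i hi
      have := Finset.mem_filter.1 (Finset.mem_filter.1 hi).1
      exact this.2
    -- antichain
    have hanti : ∀ i₁ ∈ A, ∀ i₂ ∈ A, P.le i₁ i₂ → i₁ = i₂ := by
      intro i₁ h₁ i₂ h₂ hle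
      exact (Finset.mem_filter.1 h₂).2 i₁ (Finset.mem_filter.1 h₁).1 hle
    have hcard : ∀ c : Finset (Fin d), IsMaxChain P.le (c : Set (Fin d)) →
        (c.filter (· ∈ A)).card ≤ 1 := by
      intro c hc
      refine Finset.card_le_one.2 ?_
      intro a ha b hb'
      have haA := (Finset.mem_filter.1 ha).2
      have hbA := (Finset.mem_filter.1 hb').2
      have hac := (Finset.mem_filter.1 ha).1
      have hbc := (Finset.mem_filter.1 hb').1
      by_cases hab : a = b
      · exact hab
      · rcases hc.isChain hac hbc hab with h | h
        · exact hanti a haA b hbA h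
        · exact (hanti b hbA a haA h).symm
    -- key: max chains with full sum meet A
    have hkey : ∀ c : Finset (Fin d), IsMaxChain P.le (c : Set (Fin d)) →
        ((k : ℤ) + 1 ≤ ∑ i ∈ c, x i) → ∃ i ∈ c, i ∈ A := by
      intro c hc hsum
      have hne : ((c ∩ S : Finset (Fin d)) : Set (Fin d)).Nonempty := by
        by_contra h
        rw [Set.not_nonempty_iff_eq_empty, Finset.coe_eq_empty] at h
        have : ∑ i ∈ c, x i = 0 := by
          refine Finset.sum_eq_zero fun i hi => ?_
          by_contra hxi
          have : i ∈ c ∩ S := Finset.mem_inter.2 ⟨hi, by simp [hS, hxi]⟩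
          simp [h] at this
        omega
      obtain ⟨i, hi, hmin⟩ : ∃ i ∈ (↑(c ∩ S) : Set (Fin d)),
          ∀ t ∈ (↑(c ∩ S) : Set (Fin d)), P.le (id t) (id i) → id i = id t := by
        obtain ⟨i, hi, hm⟩ := @Set.Finite.exists_minimalFor (Fin d) (Fin d) P.toLE _ id
          (↑(c ∩ S)) (Set.toFinite _) hne
        exact ⟨i, hi, fun t ht h => P.le_antisymm _ _ (hm ht h) h⟩
      simp only [id] at hmin
      have hic : i ∈ c := (Finset.mem_inter.1 hi).1
      have hiS : i ∈ S := (Finset.mem_inter.1 hi).2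
      refine ⟨i, hic, ?_⟩
      rw [hA, Finset.mem_filter]
      refine ⟨hiS, ?_⟩
      intro j hjS hji
      by_contra hne'
      -- build a bigger chain through j
      have hchain : IsChain P.le (insert j {t | t ∈ c ∧ P.le i t} : Set (Fin d)) := by
        intro a ha b hb' hab
        simp only [Set.mem_insert_iff, Set.mem_setOf_eq] at ha hb'
        rcases ha with rfl | ⟨hac, hia⟩
        · rcases hb' with rfl | ⟨hbc, hib⟩
          · exact absurd rfl hab
          · exact Or.inl (P.le_trans _ _ _ hji hib)
        · rcases hb' with rfl | ⟨hbc, hib⟩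
          · exact Or.inr (P.le_trans _ _ _ hji hia)
          · exact hc.isChain hac hbc hab
      obtain ⟨M, hM, hsub⟩ := hchain.exists_maxChain
      have hfin : M.Finite := Set.toFinite M
      have hbM := hb hfin.toFinset (by rwa [Set.Finite.coe_toFinset])
      -- the finset version of the chain
      have hjnot : j ∉ c.filter (fun t => P.le i t) := by
        intro hj
        have hij := (Finset.mem_filter.1 hj).2
        exact hne' (P.le_antisymm _ _ hji hij)
      have hsubF : insert j (c.filter (fun t => P.le i t)) ⊆ hfin.toFinset := by
        intro t ht
        rw [Set.Finite.mem_toFinset]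
        rcases Finset.mem_insert.1 ht with rfl | ht'
        · exact hsub (Set.mem_insert _ _)
        · exact hsub (Set.mem_insert_of_mem _ ⟨(Finset.mem_filter.1 ht').1,
            (Finset.mem_filter.1 ht').2⟩)
      have hge : ∑ t ∈ insert j (c.filter (fun t => P.le i t)), x t ≤ ∑ t ∈ hfin.toFinset, x t :=
        Finset.sum_le_sum_of_subset_of_nonneg hsubF (fun t _ _ => hx t)
      rw [Finset.sum_insert hjnot] at hge
      -- sum over filter equals sum over c
      have hfilteq : ∑ t ∈ c.filter (fun t => P.le i t), x t = ∑ t ∈ c, x t := by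
        rw [← Finset.sum_filter_add_sum_filter_not c (fun t => P.le i t)]
        have : ∑ t ∈ c.filter (fun t => ¬ P.le i t), x t = 0 := by
          refine Finset.sum_eq_zero fun t ht => ?_
          have htc := (Finset.mem_filter.1 ht).1
          have hnit := (Finset.mem_filter.1 ht).2
          by_contra hxt
          have htS : t ∈ c ∩ S := Finset.mem_inter.2 ⟨htc, by simp [hS, hxt]⟩
          have hti : P.le t i := by
            by_cases hti' : t = i
            · subst hti'; exact P.le_refl t
            · rcases hc.isChain htc hic hti' with h | h
              · exact h
              · exact absurd h hnit
          have := hmin t htS hti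
          exact hnit (this ▸ P.le_refl i)
        omega
      have hxj : 1 ≤ x j := by
        have := hx j
        have hne2 : x j ≠ 0 := by
          rw [hS, Finset.mem_filter] at hjS; exact hjS.2
        omega
      omega
    -- define x'
    set x' : Fin d → ℤ := fun i => x i - (if i ∈ A then 1 else 0) with hx'def
    have hx'nonneg : ∀ i, 0 ≤ x' i := by
      intro i
      simp only [hx'def]
      split
      · have := hAS i ‹i ∈ A›; have := hx i; omega
      · have := hx i; omega
    have hx'bound : ∀ c : Finset (Fin d), IsMaxChain P.le (c : Set (Fin d)) →
        ∑ i ∈ c, x' i ≤ (k : ℤ) := by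
      intro c hc
      have hsplit : ∑ i ∈ c, x' i
          = ∑ i ∈ c, x i - ((c.filter (· ∈ A)).card : ℤ) := by
        simp only [hx'def, Finset.sum_sub_distrib, Finset.sum_boole]
      rw [hsplit]
      by_cases hcase : ∑ i ∈ c, x i ≤ (k : ℤ)
      · have : (0:ℤ) ≤ ((c.filter (· ∈ A)).card : ℤ) := Int.ofNat_nonneg _
        omega
      · obtain ⟨i, hic, hiA⟩ := hkey c hc (by have := hb c hc; push_cast at this ⊢; omega)
        have hpos : 0 < (c.filter (· ∈ A)).card :=
          Finset.card_pos.2 ⟨i, Finset.mem_filter.2 ⟨hic, hiA⟩⟩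
        have := hb c hc
        push_cast at this ⊢
        omega
    obtain ⟨L', hL'len, hL'mem, hL'sum⟩ := ih x' hx'nonneg hx'bound
    refine ⟨(fun i => if i ∈ A then (1:ℝ) else 0) :: L', by simp [hL'len], ?_, ?_⟩
    · intro u hu
      rcases List.mem_cons.1 hu with rfl | hu'
      · refine ⟨⟨fun i => by positivity, ?_⟩,
          fun i => ⟨if i ∈ A then 1 else 0, by
            by_cases h : i ∈ A
            · simp only [if_pos h]; norm_num
            · simp only [if_neg h]; norm_num⟩⟩
        intro c hc
        have : ∑ i ∈ c, (if i ∈ A then (1:ℝ) else 0) = ((c.filter (· ∈ A)).card : ℝ) :=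
          Finset.sum_boole _ _
        rw [this]
        exact_mod_cast hcard c hc
      · exact hL'mem u hu'
    · rw [List.sum_cons, ← hL'sum]
      funext i
      simp only [Pi.add_apply, hx'def]
      push_cast
      split <;> ring

theorem Omega_chain_chain_normal (d : ℕ) (P Q : PartialOrder (Fin d)) :
    ∀ N : ℕ, 0 < N → ∀ a : Fin (d + 1) → ℝ, IsLatticePoint a →
      a ∈ (N : ℝ) • OmegaPoly (chainPolytope P.le) (chainPolytope Q.le) →
      ∃ f : Fin N → (Fin (d + 1) → ℝ),
        (∀ k, f k ∈ OmegaPoly (chainPolytope P.le) (chainPolytope Q.le) ∧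
          IsLatticePoint (f k)) ∧ a = ∑ k, f k := by
  classical
  intro N hN a ha hmem
  -- the two generator sets
  set X : Set (Fin (d+1) → ℝ) := (fun x => Fin.snoc x (1 : ℝ)) '' chainPolytope P.le with hX
  set Y : Set (Fin (d+1) → ℝ) := (fun x => Fin.snoc (-x) (-1 : ℝ)) '' chainPolytope Q.le with hY
  have hXne : X.Nonempty := ⟨_, ⟨0, zero_mem_chainPolytope _, rfl⟩⟩
  have hYne : Y.Nonempty := ⟨_, ⟨0, zero_mem_chainPolytope _, rfl⟩⟩
  -- membership in Omega for generators and 0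
  have hgenP : ∀ u ∈ chainPolytope P.le,
      (Fin.snoc u (1:ℝ) : Fin (d+1) → ℝ) ∈ OmegaPoly (chainPolytope P.le) (chainPolytope Q.le) :=
    fun u hu => subset_convexHull ℝ _ (Or.inl ⟨u, hu, rfl⟩)
  have hgenQ : ∀ u ∈ chainPolytope Q.le,
      (Fin.snoc (-u) (-1:ℝ) : Fin (d+1) → ℝ) ∈ OmegaPoly (chainPolytope P.le) (chainPolytope Q.le) :=
    fun u hu => subset_convexHull ℝ _ (Or.inr ⟨u, hu, rfl⟩)
  have hzero : (0 : Fin (d+1) → ℝ) ∈ OmegaPoly (chainPolytope P.le) (chainPolytope Q.le) := by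
    have h1 := hgenP 0 (zero_mem_chainPolytope _)
    have h2 := hgenQ 0 (zero_mem_chainPolytope _)
    have := (convex_convexHull ℝ _) h1 h2 (by norm_num : (0:ℝ) ≤ 1/2)
      (by norm_num : (0:ℝ) ≤ 1/2) (by norm_num)
    convert this using 1
    · rfl
    funext i
    refine Fin.lastCases ?_ ?_ i <;> simp [Pi.smul_apply] <;> norm_num
  -- extract the affine decomposition
  obtain ⟨w, hw, hwa⟩ := hmem
  rw [OmegaPoly, convexHull_union hXne hYne, mem_convexJoin] at hw
  obtain ⟨u, hu, v, hv, hseg⟩ := hw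
  -- hulls land in the slices
  have hSP : u ∈ {z : Fin (d+1) → ℝ | z (Fin.last d) = 1 ∧
      (fun i => z (Fin.castSucc i)) ∈ chainPolytope P.le} := by
    refine convexHull_min ?_ ?_ hu
    · rintro _ ⟨p, hp, rfl⟩
      exact ⟨by simp, by simpa [Fin.snoc_castSucc] using hp⟩
    · intro z1 h1 z2 h2 s t hs ht hst
      refine ⟨by simp [Pi.add_apply, Pi.smul_apply, h1.1, h2.1, smul_eq_mul]; linarith, ?_, ?_⟩
      · intro i
        have := h1.2.1 i; have := h2.2.1 i
        simp only [Pi.add_apply, Pi.smul_apply, smul_eq_mul]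
        nlinarith
      · intro c hc
        have b1 := h1.2.2 c hc; have b2 := h2.2.2 c hc
        simp only [Pi.add_apply, Pi.smul_apply, smul_eq_mul, Finset.sum_add_distrib,
          ← Finset.mul_sum]
        nlinarith
  have hSQ : v ∈ {z : Fin (d+1) → ℝ | z (Fin.last d) = -1 ∧
      (fun i => -(z (Fin.castSucc i))) ∈ chainPolytope Q.le} := by
    refine convexHull_min ?_ ?_ hv
    · rintro _ ⟨q', hq', rfl⟩
      refine ⟨by simp, ?_⟩
      have he : (fun i : Fin d => -((Fin.snoc (-q') (-1:ℝ) : Fin (d+1) → ℝ) (Fin.castSucc i)))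
          = q' := by
        funext i; simp
      rw [he]; exact hq'
    · intro z1 h1 z2 h2 s t hs ht hst
      refine ⟨by simp [Pi.add_apply, Pi.smul_apply, h1.1, h2.1, smul_eq_mul]; linarith, ?_, ?_⟩
      · intro i
        have := h1.2.1 i; have := h2.2.1 i
        simp only [Pi.add_apply, Pi.smul_apply, smul_eq_mul] at *
        nlinarith
      · intro c hc
        have b1 := h1.2.2 c hc; have b2 := h2.2.2 c hc
        simp only [Pi.add_apply, Pi.smul_apply, smul_eq_mul, neg_add, Finset.sum_add_distrib] at *
        have e1 : ∑ i ∈ c, -(s * z1 (Fin.castSucc i)) = s * ∑ i ∈ c, -(z1 (Fin.castSucc i)) := by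
          rw [Finset.mul_sum]; congr 1; funext i; ring
        have e2 : ∑ i ∈ c, -(t * z2 (Fin.castSucc i)) = t * ∑ i ∈ c, -(z2 (Fin.castSucc i)) := by
          rw [Finset.mul_sum]; congr 1; funext i; ring
        rw [e1, e2]
        nlinarith
  obtain ⟨s, t, hs, ht, hst, hw⟩ := hseg
  -- a = α • u + β • v
  set α : ℝ := N * s with hαdef
  set β : ℝ := N * t with hβdef
  have hα : 0 ≤ α := by positivity
  have hβ : 0 ≤ β := by positivity
  have hαβ : α + β = N := by rw [hαdef, hβdef, ← mul_add, hst, mul_one]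
  have hadecomp : a = α • u + β • v := by
    rw [← hwa, ← hw]
    simp only [smul_add, smul_smul]
    rfl
  -- integer coordinates
  choose z hz using ha
  set p : Fin d → ℝ := fun i => u (Fin.castSucc i) with hpdef
  set q : Fin d → ℝ := fun i => -(v (Fin.castSucc i)) with hqdef
  have hp : p ∈ chainPolytope P.le := hSP.2
  have hq : q ∈ chainPolytope Q.le := hSQ.2
  have hcoord : ∀ i : Fin d, (z (Fin.castSucc i) : ℝ) = α * p i - β * q i := by
    intro i
    rw [← hz, hadecomp]
    simp only [Pi.add_apply, Pi.smul_apply, smul_eq_mul, hpdef, hqdef]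
    ring
  have hlastz : (z (Fin.last d) : ℝ) = α - β := by
    rw [← hz, hadecomp]
    simp only [Pi.add_apply, Pi.smul_apply, smul_eq_mul, hSP.1, hSQ.1]
    ring
  -- positive and negative parts
  set yp : Fin d → ℤ := fun i => max (z (Fin.castSucc i)) 0 with hypdef
  set yn : Fin d → ℤ := fun i => max (-(z (Fin.castSucc i))) 0 with hyndef
  have hypnn : ∀ i, 0 ≤ yp i := fun i => le_max_right _ _
  have hynnn : ∀ i, 0 ≤ yn i := fun i => le_max_right _ _
  have hypyn : ∀ i, yp i - yn i = z (Fin.castSucc i) := fun i => by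
    simp only [hypdef, hyndef]; omega
  have hyple : ∀ i, (yp i : ℝ) ≤ α * p i := by
    intro i
    have h1 : (z (Fin.castSucc i) : ℝ) ≤ α * p i := by
      have := mul_nonneg hβ (hq.1 i)
      rw [hcoord i] at *
      linarith
    have h2 : (0:ℝ) ≤ α * p i := mul_nonneg hα (hp.1 i)
    simp only [hypdef]
    push_cast
    exact max_le h1 h2
  have hynle : ∀ i, (yn i : ℝ) ≤ β * q i := by
    intro i
    have h1 : -((z (Fin.castSucc i) : ℝ)) ≤ β * q i := by
      have h3 := mul_nonneg hα (hp.1 i)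
      have hc := hcoord i
      linarith
    have h2 : (0:ℝ) ≤ β * q i := mul_nonneg hβ (hq.1 i)
    have he : ((yn i : ℤ) : ℝ) = max (-((z (Fin.castSucc i)) : ℝ)) 0 := by
      simp only [hyndef, Int.cast_max, Int.cast_neg, Int.cast_zero]
    rw [he]
    exact max_le h1 h2
  -- floor bounds on chain sums
  have hypbound : ∀ c : Finset (Fin d), IsMaxChain P.le (c : Set (Fin d)) →
      ∑ i ∈ c, yp i ≤ ⌊α⌋ := by
    intro c hc
    rw [Int.le_floor]
    push_cast
    calc (∑ i ∈ c, (yp i : ℝ)) ≤ ∑ i ∈ c, α * p i := Finset.sum_le_sum (fun i _ => hyple i)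
    _ = α * ∑ i ∈ c, p i := by rw [Finset.mul_sum]
    _ ≤ α * 1 := mul_le_mul_of_nonneg_left (hp.2 c hc) hα
    _ = α := mul_one α
  have hynbound : ∀ c : Finset (Fin d), IsMaxChain Q.le (c : Set (Fin d)) →
      ∑ i ∈ c, yn i ≤ ⌊β⌋ := by
    intro c hc
    rw [Int.le_floor]
    push_cast
    calc (∑ i ∈ c, (yn i : ℝ)) ≤ ∑ i ∈ c, β * q i := Finset.sum_le_sum (fun i _ => hynle i)
    _ = β * ∑ i ∈ c, q i := by rw [Finset.mul_sum]
    _ ≤ β * 1 := mul_le_mul_of_nonneg_left (hq.2 c hc) hβ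
    _ = β := mul_one β
  set k : ℕ := ⌊α⌋.toNat with hkdef
  set l : ℕ := ⌊β⌋.toNat with hldef
  have hk : ((k : ℕ) : ℤ) = ⌊α⌋ := Int.toNat_of_nonneg (Int.floor_nonneg.2 hα)
  have hl : ((l : ℕ) : ℤ) = ⌊β⌋ := Int.toNat_of_nonneg (Int.floor_nonneg.2 hβ)
  obtain ⟨Lp, hLplen, hLpmem, hLpsum⟩ := chain_decomp P k yp hypnn
    (fun c hc => by rw [hk]; exact hypbound c hc)
  obtain ⟨Lq, hLqlen, hLqmem, hLqsum⟩ := chain_decomp Q l yn hynnn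
    (fun c hc => by rw [hl]; exact hynbound c hc)
  have hklN : k + l ≤ N := by
    have h1 : ((k:ℕ):ℝ) ≤ α := by
      rw [show ((k:ℕ):ℝ) = ((⌊α⌋:ℤ):ℝ) by rw [← hk]; push_cast; ring]
      exact Int.floor_le α
    have h2 : ((l:ℕ):ℝ) ≤ β := by
      rw [show ((l:ℕ):ℝ) = ((⌊β⌋:ℤ):ℝ) by rw [← hl]; push_cast; ring]
      exact Int.floor_le β
    have : ((k + l : ℕ) : ℝ) ≤ (N : ℝ) := by push_cast; linarith [hαβ]
    exact_mod_cast this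
  have hm : (k : ℤ) - (l : ℤ) = z (Fin.last d) := by
    have hαβm : α = β + ((z (Fin.last d) : ℤ) : ℝ) := by rw [hlastz]; ring
    have : ⌊α⌋ = ⌊β⌋ + z (Fin.last d) := by rw [hαβm, Int.floor_add_intCast]
    rw [hk, hl]
    omega
  -- assemble the list
  set L : List (Fin (d+1) → ℝ) := Lp.map (fun g => (Fin.snoc g (1:ℝ) : Fin (d+1) → ℝ)) ++
      (Lq.map (fun g => (Fin.snoc (-g) (-1:ℝ) : Fin (d+1) → ℝ)) ++
        List.replicate (N - (k + l)) 0) with hLdef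
  have hLlen : L.length = N := by
    simp only [hLdef, List.length_append, List.length_map, List.length_replicate,
      hLplen, hLqlen]
    omega
  have hLmem : ∀ g ∈ L, g ∈ OmegaPoly (chainPolytope P.le) (chainPolytope Q.le) ∧
      IsLatticePoint g := by
    intro g hg
    simp only [hLdef, List.mem_append, List.mem_map, List.mem_replicate] at hg
    rcases hg with ⟨g', hg', rfl⟩ | ⟨g', hg', rfl⟩ | ⟨-, rfl⟩
    · refine ⟨hgenP g' (hLpmem g' hg').1, ?_⟩
      intro i
      refine Fin.lastCases ?_ ?_ i
      · exact ⟨1, by simp⟩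
      · intro j
        obtain ⟨zz, hzz⟩ := (hLpmem g' hg').2 j
        exact ⟨zz, by simp [Fin.snoc_castSucc, hzz]⟩
    · refine ⟨hgenQ g' (hLqmem g' hg').1, ?_⟩
      intro i
      refine Fin.lastCases ?_ ?_ i
      · exact ⟨-1, by simp⟩
      · intro j
        obtain ⟨zz, hzz⟩ := (hLqmem g' hg').2 j
        exact ⟨-zz, by simp [Fin.snoc_castSucc, hzz]⟩
    · exact ⟨hzero, fun i => ⟨0, by simp⟩⟩
  have hLsum : L.sum = a := by
    rw [hLdef, List.sum_append, List.sum_append, map_snoc_sum, map_snoc_neg_sum,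
      List.sum_replicate, smul_zero, add_zero, ← hLpsum, ← hLqsum, hLplen, hLqlen,
      snoc_add]
    funext i
    refine Fin.lastCases ?_ ?_ i
    · rw [Fin.snoc_last, hz (Fin.last d), ← hm]
      push_cast
      ring
    · intro j
      rw [Fin.snoc_castSucc, hz (Fin.castSucc j)]
      have := hypyn j
      simp only [Pi.add_apply, Pi.neg_apply]
      rw [← this]
      push_cast
      ring
  refine ⟨fun j => L.get (Fin.cast hLlen.symm j), fun j => hLmem _ (List.get_mem L _), ?_⟩
  rw [← hLsum]
  have hsum2 : L.sum = ∑ i : Fin L.length, L.get i := by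
    conv_lhs => rw [← List.ofFn_get L]
    rw [List.sum_ofFn]
  rw [hsum2]
  exact Fintype.sum_equiv (finCongr hLlen) _ _ (fun i => rfl)
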